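/- Let (ξ_n)_{n≥1} be i.i.d. EXP(1), (α_n)_{n≥1} i.i.d. with density (1/4)sin(x/2) on [0,2π], all independent; set ν_n := ⌊ξ_n/(2π)⌋ and ζ_n := ξ_n - 2πν_n. Define the Markov chain (ζ_n, θ_n) on [0,2π) × [0,2π) by θ_{n+1} := θ_n + ζ_n/2 + (ν_{n+1}+1)α_{n+1} + ζ_{n+1}/2 (mod 2π). Then the product measure in which ζ ~ TRUNCEXP(1, 2π) and θ ~ UNI[0, 2π) are independent is a stationary distribution for this Markov chain. -/

import Mathlib

open MeasureTheory ProbabilityTheory Real Set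
open scoped ENNReal

/-- TRUNCEXP(1, L): density e^{-x}/(1-e^{-L}) on [0,L]. -/
noncomputable def truncExpMeasure (L : ℝ) : Measure ℝ :=
  volume.withDensity fun x =>
    ENNReal.ofReal (if x ∈ Icc 0 L then Real.exp (-x) / (1 - Real.exp (-L)) else 0)

/-- The uniform distribution on [0, 2π). -/
noncomputable def uniMeasure : Measure ℝ :=
  (ENNReal.ofReal (2 * π))⁻¹ • volume.restrict (Ico 0 (2 * π))

/-- The scattering-angle distribution: density (1/4)·sin(x/2) on [0, 2π]. -/
noncomputable def sinHalfMeasure : Measure ℝ :=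
  volume.withDensity fun x =>
    ENNReal.ofReal (if x ∈ Icc 0 (2 * π) then (1 / 4) * Real.sin (x / 2) else 0)

/-- Reduction modulo 2π to [0, 2π). -/
noncomputable def mod2pi (x : ℝ) : ℝ := x - 2 * π * ⌊x / (2 * π)⌋

lemma mod2pi_eq_fract (x : ℝ) : mod2pi x = Int.fract (x / (2 * π)) * (2 * π) := by
  have h : (2 * π) ≠ 0 := ne_of_gt Real.two_pi_pos
  unfold mod2pi Int.fract
  field_simp

lemma measurable_mod2pi : Measurable mod2pi := by
  have : mod2pi = fun x => Int.fract (x / (2 * π)) * (2 * π) := funext mod2pi_eq_fract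
  rw [this]
  exact (measurable_fract.comp (measurable_id.div_const _)).mul_const _

lemma mod2pi_eq_self {x : ℝ} (hx : x ∈ Ico 0 (2 * π)) : mod2pi x = x := by
  have h0 : ⌊x / (2 * π)⌋ = 0 := by
    rw [Int.floor_eq_zero_iff]
    constructor
    · exact div_nonneg hx.1 Real.two_pi_pos.le
    · rw [div_lt_one Real.two_pi_pos]; exact hx.2
  simp [mod2pi, h0]

lemma map_mod2pi_add (c : ℝ) :
    Measure.map (fun θ => mod2pi (θ + c)) (volume.restrict (Ico 0 (2 * π)))
      = volume.restrict (Ico 0 (2 * π)) := by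
  haveI : Fact ((0:ℝ) < 2 * π) := ⟨Real.two_pi_pos⟩
  set e : AddCircle (2 * π) → ℝ :=
    fun y => ((AddCircle.measurableEquivIco (2 * π) 0 y : ℝ)) with he_def
  have hem : Measurable e :=
    measurable_subtype_coe.comp (AddCircle.measurableEquivIco (2 * π) 0).measurable
  have hemk : ∀ x : ℝ, e (x : AddCircle (2 * π)) = mod2pi x := by
    intro x
    rw [mod2pi_eq_fract]
    exact AddCircle.coe_equivIco_mk_apply (p := 2 * π) x
  have hmk : Measurable (fun x : ℝ => (x : AddCircle (2 * π))) := AddCircle.measurable_mk'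
  have hIoc : volume.restrict (Ico 0 (2 * π)) = volume.restrict (Ioc 0 (2 * π)) :=
    Measure.restrict_congr_set Ico_ae_eq_Ioc
  have hmkmap : Measure.map (fun x : ℝ => (x : AddCircle (2 * π)))
      (volume.restrict (Ioc 0 (2 * π))) = volume := by
    have := (AddCircle.measurePreserving_mk (2 * π) 0).map_eq
    rwa [zero_add] at this
  have hmape : Measure.map e volume = volume.restrict (Ico 0 (2 * π)) := by
    rw [← hmkmap, Measure.map_map hem hmk]
    have h1 : Measure.map (e ∘ fun x : ℝ => (x : AddCircle (2 * π)))
        (volume.restrict (Ioc 0 (2 * π))) = Measure.map mod2pi (volume.restrict (Ioc 0 (2 * π))) := by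
      apply Measure.map_congr
      exact Filter.Eventually.of_forall fun x => hemk x
    rw [h1, ← hIoc]
    have h2 : Measure.map mod2pi (volume.restrict (Ico 0 (2 * π)))
        = Measure.map id (volume.restrict (Ico 0 (2 * π))) := by
      apply Measure.map_congr
      refine (ae_restrict_iff' measurableSet_Ico).2 (Filter.Eventually.of_forall ?_)
      intro x hx
      exact mod2pi_eq_self hx
    rw [h2, Measure.map_id]
  have hfuneq : (fun θ : ℝ => mod2pi (θ + c))
      = e ∘ ((fun y : AddCircle (2 * π) => y + (c : AddCircle (2 * π)))
          ∘ (fun x : ℝ => (x : AddCircle (2 * π)))) := by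
    funext θ
    have : ((θ : AddCircle (2 * π)) + (c : AddCircle (2 * π))) = ((θ + c : ℝ) : AddCircle (2 * π)) := by
      rfl
    simp only [Function.comp_apply, this, hemk]
  rw [hIoc, hfuneq, ← Measure.map_map hem ((measurable_add_const _).comp hmk),
    ← Measure.map_map (measurable_add_const _) hmk, hmkmap,
    MeasureTheory.map_add_right_eq_self volume _, hmape]
  exact hIoc

lemma map_mod2pi_add_uni (c : ℝ) :
    Measure.map (fun θ => mod2pi (θ + c)) uniMeasure = uniMeasure := by
  unfold uniMeasure
  rw [Measure.map_smul, map_mod2pi_add]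

instance uniMeasure_prob : IsProbabilityMeasure uniMeasure := by
  constructor
  unfold uniMeasure
  rw [Measure.smul_apply, Measure.restrict_apply MeasurableSet.univ, univ_inter,
    Real.volume_Ico, smul_eq_mul, sub_zero]
  exact ENNReal.inv_mul_cancel ((ENNReal.ofReal_pos.2 Real.two_pi_pos).ne') ENNReal.ofReal_ne_top

lemma expMeasure_one_eq :
    expMeasure 1 = volume.withDensity
      (fun x => ENNReal.ofReal (if 0 ≤ x then Real.exp (-x) else 0)) := by
  unfold expMeasure gammaMeasure
  congr 1
  funext x
  rw [gammaPDF, gammaPDFReal]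
  split_ifs with h
  · norm_num [Real.Gamma_one, Real.rpow_zero]
  · rfl

lemma map_mod2pi_exp :
    Measure.map mod2pi (expMeasure 1) = truncExpMeasure (2 * π) := by
  have hT : (0:ℝ) < 2 * π := Real.two_pi_pos
  have hexpTlt : Real.exp (-(2 * π)) < 1 := Real.exp_lt_one_iff.2 (by linarith)
  have hc : (0:ℝ) < 1 - Real.exp (-(2 * π)) := by linarith
  ext s hs
  rw [Measure.map_apply measurable_mod2pi hs, expMeasure_one_eq,
    withDensity_apply _ (measurable_mod2pi hs)]
  unfold truncExpMeasure
  rw [withDensity_apply _ hs]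
  set T : ℝ := 2 * π with hTdef
  set A : Set ℝ := mod2pi ⁻¹' s with hA
  have hAm : MeasurableSet A := measurable_mod2pi hs
  set f : ℝ → ℝ≥0∞ := fun x => ENNReal.ofReal (if 0 ≤ x then Real.exp (-x) else 0) with hf
  set g : ℝ → ℝ≥0∞ := fun y => ENNReal.ofReal (Real.exp (-y)) with hg
  have hgm : Measurable g := (Real.measurable_exp.comp measurable_neg).ennreal_ofReal
  set J : ℝ≥0∞ := ∫⁻ y in Ico 0 T ∩ s, ENNReal.ofReal (Real.exp (-y)) with hJ
  set I : ℕ → Set ℝ := fun n => Ico (n * T) ((n + 1) * T) with hI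
  have hIm : ∀ n, MeasurableSet (I n) := fun n => measurableSet_Ico
  have hdisj' : ∀ m n : ℕ, m < n → Disjoint (I m) (I n) := by
    intro m n h
    rw [hI]; dsimp only
    rw [Set.Ico_disjoint_Ico]
    have h1 : ((m:ℝ) + 1) ≤ n := by exact_mod_cast h
    calc min (((m:ℝ) + 1) * T) (((n:ℝ) + 1) * T) ≤ ((m:ℝ) + 1) * T := min_le_left _ _
      _ ≤ (n:ℝ) * T := by nlinarith
      _ ≤ max ((m:ℝ) * T) ((n:ℝ) * T) := le_max_right _ _
  have hIdisj : Pairwise (Function.onFun Disjoint I) := by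
    intro m n hmn
    rcases lt_or_gt_of_ne hmn with h | h
    · exact hdisj' m n h
    · exact (hdisj' n m h).symm
  have hfloor : ∀ (n : ℕ) (x : ℝ), x ∈ I n → mod2pi x = x - n * T := by
    intro n x hx
    have hfl : ⌊x / T⌋ = (n : ℤ) := by
      rw [Int.floor_eq_iff]
      constructor
      · push_cast
        rw [le_div_iff₀ hT]
        exact hx.1
      · push_cast
        rw [div_lt_iff₀ hT]
        exact hx.2
    unfold mod2pi
    rw [← hTdef, hfl]
    push_cast
    ring
  have hfind : f = (Ici (0:ℝ)).indicator f := by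
    funext x
    by_cases hx : (0:ℝ) ≤ x <;> simp [indicator, hx, hf]
  have hIci : Ici (0:ℝ) = ⋃ n : ℕ, I n := by
    ext x
    simp only [mem_Ici, mem_iUnion, hI, mem_Ico]
    constructor
    · intro hx
      have h0 : (0:ℤ) ≤ ⌊x / T⌋ := Int.floor_nonneg.2 (div_nonneg hx hT.le)
      refine ⟨⌊x / T⌋.toNat, ?_, ?_⟩
      · have hcast : ((⌊x / T⌋.toNat : ℕ) : ℝ) = ((⌊x / T⌋ : ℤ) : ℝ) := by
          exact_mod_cast Int.toNat_of_nonneg h0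
        rw [hcast]
        have h1 := Int.floor_le (x / T)
        calc ((⌊x / T⌋ : ℤ) : ℝ) * T ≤ (x / T) * T := by nlinarith
          _ = x := by field_simp
      · have hcast : ((⌊x / T⌋.toNat : ℕ) : ℝ) = ((⌊x / T⌋ : ℤ) : ℝ) := by
          exact_mod_cast Int.toNat_of_nonneg h0
        rw [hcast]
        have h1 := Int.lt_floor_add_one (x / T)
        have : x / T * T < (((⌊x / T⌋ : ℤ) : ℝ) + 1) * T := by nlinarith
        calc x = (x / T) * T := by field_simp
          _ < (((⌊x / T⌋ : ℤ) : ℝ) + 1) * T := this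
    · rintro ⟨n, h1, h2⟩
      have : (0:ℝ) ≤ (n:ℝ) * T := mul_nonneg (Nat.cast_nonneg n) hT.le
      linarith
  have step1 : ∫⁻ x in A, f x = ∑' n : ℕ, ∫⁻ x in I n ∩ A, f x := by
    conv_lhs => rw [hfind]
    rw [lintegral_indicator measurableSet_Ici, hIci, lintegral_iUnion hIm hIdisj]
    congr 1
    funext n
    rw [Measure.restrict_restrict (hIm n)]
  have key : ∀ (n : ℕ) (y : ℝ), (I n ∩ A).indicator f (y + n * T)
      = ENNReal.ofReal (Real.exp (-T)) ^ n * (Ico 0 T ∩ s).indicator g y := by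
    intro n y
    have hnT : (0:ℝ) ≤ (n:ℝ) * T := mul_nonneg (Nat.cast_nonneg n) hT.le
    by_cases hy : y ∈ Ico 0 T ∩ s
    · have hyI : y + (n:ℝ) * T ∈ I n := by
        constructor
        · have := hy.1.1; linarith
        · have := hy.1.2; nlinarith
      have hyA : y + (n:ℝ) * T ∈ A := by
        rw [hA, mem_preimage, hfloor n _ hyI]
        simpa using hy.2
      rw [indicator_of_mem (mem_inter hyI hyA), indicator_of_mem hy]
      simp only [hf, hg]
      have h0 : (0:ℝ) ≤ y + (n:ℝ) * T := by have := hy.1.1; linarith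
      rw [if_pos h0]
      have hexp : Real.exp (-(y + (n:ℝ) * T)) = Real.exp (-y) * Real.exp (-T) ^ n := by
        rw [← Real.exp_nat_mul, ← Real.exp_add]
        ring_nf
      rw [hexp, ENNReal.ofReal_mul (Real.exp_nonneg _), ENNReal.ofReal_pow (Real.exp_nonneg _)]
      ring
    · have hyc : y + (n:ℝ) * T ∉ I n ∩ A := by
        rintro ⟨h1, h2⟩
        apply hy
        have hy0 : (0:ℝ) ≤ y := by have := h1.1; nlinarith
        have hyT : y < T := by have := h1.2; nlinarith
        refine ⟨⟨hy0, hyT⟩, ?_⟩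
        rw [hA, mem_preimage, hfloor n _ h1] at h2
        simpa using h2
      rw [indicator_of_notMem hyc, indicator_of_notMem hy, mul_zero]
  have step2 : ∀ n : ℕ, ∫⁻ x in I n ∩ A, f x = ENNReal.ofReal (Real.exp (-T)) ^ n * J := by
    intro n
    rw [← lintegral_indicator ((hIm n).inter hAm)]
    rw [← lintegral_add_right_eq_self (fun x => (I n ∩ A).indicator f x) ((n:ℝ) * T)]
    simp only [key n]
    rw [lintegral_const_mul _ (hgm.indicator (measurableSet_Ico.inter hs)), hJ,
      ← lintegral_indicator (measurableSet_Ico.inter hs)]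
  have hlhs : ∫⁻ x in A, f x = (1 - ENNReal.ofReal (Real.exp (-T)))⁻¹ * J := by
    rw [step1, tsum_congr step2, ENNReal.tsum_mul_right, ENNReal.tsum_geometric]
  have hpt : ∀ x : ℝ, ENNReal.ofReal (if x ∈ Icc 0 T then Real.exp (-x) / (1 - Real.exp (-T)) else 0)
      = (Icc 0 T).indicator (fun x => g x * (ENNReal.ofReal (1 - Real.exp (-T)))⁻¹) x := by
    intro x
    by_cases hx : x ∈ Icc 0 T
    · rw [if_pos hx, indicator_of_mem hx, hg, ENNReal.ofReal_div_of_pos hc, div_eq_mul_inv]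
    · rw [if_neg hx, indicator_of_notMem hx, ENNReal.ofReal_zero]
  have hrhs : ∫⁻ x in s, ENNReal.ofReal (if x ∈ Icc 0 T then Real.exp (-x) / (1 - Real.exp (-T)) else 0)
      = J * (ENNReal.ofReal (1 - Real.exp (-T)))⁻¹ := by
    simp only [hpt]
    rw [lintegral_indicator measurableSet_Icc, Measure.restrict_restrict measurableSet_Icc]
    have hae : (Icc 0 T ∩ s : Set ℝ) =ᵐ[volume] (Ico 0 T ∩ s : Set ℝ) :=
      ae_eq_set_inter Ico_ae_eq_Icc.symm (Filter.EventuallyEq.refl _ _)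
    rw [Measure.restrict_congr_set hae, lintegral_mul_const _ hgm, hJ]
  rw [hlhs, hrhs, ENNReal.ofReal_sub 1 (Real.exp_nonneg _), ENNReal.ofReal_one, mul_comm]

instance truncExp_prob : IsProbabilityMeasure (truncExpMeasure (2 * π)) := by
  rw [← map_mod2pi_exp]
  haveI : IsProbabilityMeasure (expMeasure 1) := isProbabilityMeasure_expMeasure one_pos
  exact Measure.isProbabilityMeasure_map measurable_mod2pi.aemeasurable

/-- one step of the Markov chain (ζ, θ) ↦ (ζ', θ') with
θ' = θ + ζ/2 + (ν'+1)α + ζ'/2 (mod 2π) preserves the product measure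
TRUNCEXP(1,2π) ⊗ UNI[0,2π). -/
theorem stmt3
    {Ω : Type*} [MeasureSpace Ω] [IsProbabilityMeasure (ℙ : Measure Ω)]
    (Z Θ Ξ A : Ω → ℝ)
    (hZm : Measurable Z) (hΘm : Measurable Θ) (hΞm : Measurable Ξ) (hAm : Measurable A)
    (hindep : iIndepFun ![Z, Θ, Ξ, A] ℙ)
    (hZ : Measure.map Z ℙ = truncExpMeasure (2 * π))
    (hΘ : Measure.map Θ ℙ = uniMeasure)
    (hΞ : Measure.map Ξ ℙ = ProbabilityTheory.expMeasure 1)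
    (hA : Measure.map A ℙ = sinHalfMeasure)
    (ν : Ω → ℤ) (hν : ∀ ω, ν ω = ⌊Ξ ω / (2 * π)⌋)
    (ζ' : Ω → ℝ) (hζ' : ∀ ω, ζ' ω = Ξ ω - 2 * π * (ν ω))
    (θ' : Ω → ℝ)
    (hθ' : ∀ ω, θ' ω = mod2pi (Θ ω + Z ω / 2 + ((ν ω : ℝ) + 1) * A ω + ζ' ω / 2)) :
    Measure.map (fun ω => (ζ' ω, θ' ω)) ℙ = (truncExpMeasure (2 * π)).prod uniMeasure := by
  classical
  -- the triple V = (Z, Ξ, A)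
  set V : Ω → ℝ × ℝ × ℝ := fun ω => (Z ω, Ξ ω, A ω) with hVdef
  have hVm : Measurable V := hZm.prodMk (hΞm.prodMk hAm)
  -- measurable ingredients
  have hintm : Measurable (fun v : ℝ × ℝ × ℝ => ((⌊v.2.1 / (2 * π)⌋ : ℤ) : ℝ)) := by
    have h1 : Measurable (fun v : ℝ × ℝ × ℝ => v.2.1) := measurable_fst.comp measurable_snd
    exact Measurable.comp (measurable_from_top (f := (Int.cast : ℤ → ℝ))) ((h1.div_const _).floor)
  set H : ℝ × ℝ × ℝ → ℝ :=
    fun v => v.1 / 2 + (((⌊v.2.1 / (2 * π)⌋ : ℤ) : ℝ) + 1) * v.2.2 + mod2pi v.2.1 / 2 with hHdef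
  have hHm : Measurable H := by
    apply Measurable.add
    apply Measurable.add
    · exact measurable_fst.div_const _
    · exact (hintm.add measurable_const).mul (measurable_snd.comp measurable_snd)
    · exact ((measurable_mod2pi.comp (measurable_fst.comp measurable_snd)).div_const _)
  set G : ℝ × ℝ × ℝ → ℝ := fun v => mod2pi v.2.1 with hGdef
  have hGm : Measurable G := measurable_mod2pi.comp (measurable_fst.comp measurable_snd)
  set F : (ℝ × ℝ × ℝ) × ℝ → ℝ × ℝ := fun p => (G p.1, mod2pi (p.2 + H p.1)) with hFdef
  have hFm : Measurable F := by
    apply Measurable.prodMk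
    · exact hGm.comp measurable_fst
    · exact measurable_mod2pi.comp (measurable_snd.add (hHm.comp measurable_fst))
  -- independence of V and Θ
  have hm4 : ∀ i, Measurable (![Z, Θ, Ξ, A] i) := by
    intro i
    fin_cases i <;> assumption
  have hIndep : IndepFun V Θ ℙ := by
    have h := hindep.indepFun_finset ({0, 2, 3} : Finset (Fin 4)) ({1} : Finset (Fin 4))
      (by decide) hm4
    have e0 : ((0 : Fin 4) ∈ ({0, 2, 3} : Finset (Fin 4))) := by decide
    have e2 : ((2 : Fin 4) ∈ ({0, 2, 3} : Finset (Fin 4))) := by decide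
    have e3 : ((3 : Fin 4) ∈ ({0, 2, 3} : Finset (Fin 4))) := by decide
    have e1 : ((1 : Fin 4) ∈ ({1} : Finset (Fin 4))) := by decide
    have hφ : Measurable (fun g : (({0, 2, 3} : Finset (Fin 4)) → ℝ) =>
        (g ⟨0, e0⟩, g ⟨2, e2⟩, g ⟨3, e3⟩)) :=
      (measurable_pi_apply _).prodMk ((measurable_pi_apply _).prodMk (measurable_pi_apply _))
    have hψ : Measurable (fun g : (({1} : Finset (Fin 4)) → ℝ) => g ⟨1, e1⟩) :=
      measurable_pi_apply _
    have h2 := h.comp hφ hψ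
    exact h2
  have hmap : Measure.map (fun ω => (V ω, Θ ω)) ℙ
      = (Measure.map V ℙ).prod (Measure.map Θ ℙ) :=
    (indepFun_iff_map_prod_eq_prod_map_map hVm.aemeasurable hΘm.aemeasurable).1 hIndep
  have hcomp : (fun ω => (ζ' ω, θ' ω)) = F ∘ (fun ω => (V ω, Θ ω)) := by
    funext ω
    have hz : ζ' ω = mod2pi (Ξ ω) := by rw [hζ', hν]; rfl
    apply Prod.ext
    · simpa [F, G, V] using hz
    · show θ' ω = mod2pi (Θ ω + H (V ω))
      rw [hθ', hz, hν]
      congr 1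
      simp only [H, V]
      ring
  rw [hcomp, ← Measure.map_map hFm (hVm.prodMk hΘm), hmap, hΘ]
  haveI : IsProbabilityMeasure (Measure.map V ℙ) := Measure.isProbabilityMeasure_map hVm.aemeasurable
  refine (Measure.prod_eq ?_).symm
  intro s t hs ht
  rw [Measure.map_apply hFm (hs.prod ht), Measure.prod_apply (hFm (hs.prod ht))]
  have hGs : MeasurableSet (G ⁻¹' s) := hGm hs
  have hint : ∀ v : ℝ × ℝ × ℝ,
      uniMeasure (Prod.mk v ⁻¹' (F ⁻¹' s ×ˢ t)) = (G ⁻¹' s).indicator (fun _ => uniMeasure t) v := by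
    intro v
    by_cases hv : v ∈ G ⁻¹' s
    · have hset : (Prod.mk v ⁻¹' (F ⁻¹' s ×ˢ t)) = (fun θ => mod2pi (θ + H v)) ⁻¹' t := by
        ext θ
        simp [F, Set.mem_prod, Set.mem_preimage] at hv ⊢; simp [hv]
      rw [hset, indicator_of_mem hv]
      calc uniMeasure ((fun θ => mod2pi (θ + H v)) ⁻¹' t)
          = (Measure.map (fun θ => mod2pi (θ + H v)) uniMeasure) t :=
            (Measure.map_apply (measurable_mod2pi.comp (measurable_add_const _)) ht).symm
        _ = uniMeasure t := by rw [map_mod2pi_add_uni]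
    · have hset : (Prod.mk v ⁻¹' (F ⁻¹' s ×ˢ t)) = ∅ := by
        ext θ
        simp [F, Set.mem_prod, Set.mem_preimage] at hv ⊢; simp [hv]
      rw [hset, indicator_of_notMem hv]
      exact measure_empty
  rw [lintegral_congr hint, lintegral_indicator_const hGs]
  have hGV : Measure.map G (Measure.map V ℙ) = truncExpMeasure (2 * π) := by
    rw [Measure.map_map hGm hVm]
    have hcomp2 : (G ∘ V) = mod2pi ∘ Ξ := rfl
    rw [hcomp2, ← Measure.map_map measurable_mod2pi hΞm, hΞ, map_mod2pi_exp]
  have hval : (Measure.map V ℙ) (G ⁻¹' s) = truncExpMeasure (2 * π) s := by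
    rw [← hGV, Measure.map_apply hGm hs]
  rw [hval, mul_comm]
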